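/- If (w_i) is a positive sequence such that there exists ε>0 and k₀ with 1/w_k² ≥ ε·∑_{i=k}^∞ 1/w_i² for all k ≥ k₀ (in particular ∑ 1/w_i² < ∞), then for all k ≥ k₀ one has ∑_{j=k}^∞ (j-k+1)²/w_j² ≤ (2/ε³)·(1/w_k²). -/
import Mathlib

open scoped ENNReal
open Finset

lemma aux_shift (h : ℕ → ℝ≥0∞) (i : ℕ) :
    (∑' m, h (i + m)) = ∑' j, if i ≤ j then h j else 0 := by
  refine (tsum_eq_tsum_of_ne_zero_bij (fun x => i + (x : ℕ)) ?_ ?_ ?_).symm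
  · intro a b hab
    have : i + (a : ℕ) = i + (b : ℕ) := hab
    exact Subtype.ext (by omega)
  · intro j hj
    simp only [Function.mem_support, ne_eq, ite_eq_right_iff, not_forall] at hj
    obtain ⟨hij, hj0⟩ := hj
    refine ⟨⟨j - i, ?_⟩, by simp; omega⟩
    simp only [Function.mem_support]
    rwa [Nat.add_sub_cancel' hij]
  · intro x
    simp

lemma aux_indic (j : ℕ) (c : ℕ → ℝ≥0∞) :
    (∑' i : ℕ, if i ≤ j then c i else 0) = ∑ i ∈ range (j + 1), c i := by
  rw [tsum_eq_sum (s := range (j + 1)) (by intro b hb; simp at hb; simp; omega)]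
  apply Finset.sum_congr rfl
  intro i hi
  simp at hi
  have : i ≤ j := by omega
  simp [this]

lemma aux_count (a h : ℕ → ℝ≥0∞) :
    (∑' i, ∑' m, a m * h (i + m)) = ∑' j, (∑ m ∈ range (j + 1), a m) * h j := by
  have h1 : ∀ i : ℕ, (∑' m, a m * h (i + m)) = ∑' j, if i ≤ j then a (j - i) * h j else 0 := by
    intro i
    have := aux_shift (fun j => a (j - i) * h j) i
    simpa using this
  calc (∑' i, ∑' m, a m * h (i + m))
      = ∑' i, ∑' j, if i ≤ j then a (j - i) * h j else 0 := tsum_congr h1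
    _ = ∑' j, ∑' i, if i ≤ j then a (j - i) * h j else 0 := ENNReal.tsum_comm
    _ = ∑' j, ∑ i ∈ range (j + 1), a (j - i) * h j :=
        tsum_congr fun j => aux_indic j _
    _ = ∑' j, (∑ m ∈ range (j + 1), a m) * h j := by
        refine tsum_congr fun j => ?_
        rw [← Finset.sum_mul]
        congr 1
        have := Finset.sum_range_reflect (fun m => a m) (j + 1)
        simpa using this

theorem stmt_0 (w : ℕ → ℝ) (hw : ∀ i, 0 < w i)
    (hsum : Summable (fun i => 1 / (w i) ^ 2))
    (ε : ℝ) (hε : 0 < ε) (k₀ : ℕ)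
    (hyp : ∀ k, k₀ ≤ k → ε * ∑' i : ℕ, 1 / (w (k + i)) ^ 2 ≤ 1 / (w k) ^ 2) :
    ∀ k, k₀ ≤ k →
      ∑' j : ℕ, ((j : ℝ) + 1) ^ 2 / (w (k + j)) ^ 2 ≤ (2 / ε ^ 3) * (1 / (w k) ^ 2) := by
  intro k hk
  set f : ℕ → ℝ≥0∞ := fun n => ENNReal.ofReal (1 / (w n) ^ 2) with hfdef
  have hfne : ∀ n, f n ≠ ⊤ := fun n => ENNReal.ofReal_ne_top
  have hsumk : ∀ k : ℕ, Summable (fun i => 1 / (w (k + i)) ^ 2) := by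
    intro k
    have := (summable_nat_add_iff k).2 hsum
    simpa [add_comm] using this
  have hS : ∀ k : ℕ, (∑' i, f (k + i)) = ENNReal.ofReal (∑' i, 1 / (w (k + i)) ^ 2) :=
    fun k => (ENNReal.ofReal_tsum_of_nonneg (fun i => by positivity) (hsumk k)).symm
  set ε' : ℝ≥0∞ := ENNReal.ofReal ε with hε'def
  have hε'0 : ε' ≠ 0 := (ENNReal.ofReal_pos.2 hε).ne'
  have hε't : ε' ≠ ⊤ := ENNReal.ofReal_ne_top
  have hypE : ∀ m, k₀ ≤ m → ε' * (∑' i, f (m + i)) ≤ f m := by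
    intro m hm
    rw [hS m, hε'def, ← ENNReal.ofReal_mul hε.le]
    exact ENNReal.ofReal_le_ofReal (hyp m hm)
  set S : ℕ → ℝ≥0∞ := fun m => ∑' i, f (m + i) with hSdef
  set A : ℕ → ℝ≥0∞ := fun m => ∑' j : ℕ, ((j : ℝ≥0∞) + 1) * f (m + j) with hAdef
  -- A m = ∑' i, S (m + i)
  have hAS : ∀ m : ℕ, A m = ∑' i, S (m + i) := by
    intro m
    have hc := aux_count (fun _ => (1 : ℝ≥0∞)) (fun j => f (m + j))
    simp only [one_mul, Finset.sum_const, Finset.card_range, nsmul_eq_mul, mul_one] at hc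
    calc A m = ∑' j : ℕ, (((j + 1 : ℕ) : ℝ≥0∞)) * f (m + j) := by
          refine tsum_congr fun j => ?_
          push_cast
          ring_nf
      _ = ∑' i, ∑' m1, f (m + (i + m1)) := hc.symm
      _ = ∑' i, S (m + i) :=
          tsum_congr fun i => tsum_congr fun m1 => by rw [← add_assoc]
  -- step 1: ε' * A k ≤ S k for k ≥ k₀
  have step1 : ∀ m, k₀ ≤ m → ε' * A m ≤ S m := by
    intro m hm
    rw [hAS m, ← ENNReal.tsum_mul_left]
    exact Summable.tsum_le_tsum (fun i => hypE (m + i) (le_trans hm (Nat.le_add_right m i)))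
      ENNReal.summable ENNReal.summable
  -- step 2: ε' * (∑' i, A (k + i)) ≤ A k
  have step2 : ε' * (∑' i, A (k + i)) ≤ A k := by
    rw [← ENNReal.tsum_mul_left, hAS k]
    exact Summable.tsum_le_tsum (fun i => step1 (k + i) (le_trans hk (Nat.le_add_right k i)))
      ENNReal.summable ENNReal.summable
  set B : ℝ≥0∞ := ∑' j : ℕ, ((j : ℝ≥0∞) + 1) ^ 2 * f (k + j) with hBdef
  -- step 3 : B ≤ 2 * ∑' i, A (k + i)
  have step3 : B ≤ 2 * ∑' i, A (k + i) := by
    have hc := aux_count (fun m => (m : ℝ≥0∞) + 1) (fun j => f (k + j))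
    have hAe : (∑' i, A (k + i)) = ∑' j, (∑ m ∈ range (j + 1), ((m : ℝ≥0∞) + 1)) * f (k + j) := by
      rw [← hc]
      exact tsum_congr fun i => tsum_congr fun j => by rw [← add_assoc]
    rw [hAe, ← ENNReal.tsum_mul_left]
    refine Summable.tsum_le_tsum (fun j => ?_) ENNReal.summable ENNReal.summable
    rw [← mul_assoc]
    apply mul_le_mul_left
    have hnat : (j + 1) ^ 2 ≤ 2 * ∑ m ∈ range (j + 1), (m + 1) := by
      have h3 : (∑ i ∈ range (j + 1), i) * 2 = (j + 1) * j := by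
        simpa using Finset.sum_range_id_mul_two (j + 1)
      have h2 : ∑ m ∈ range (j + 1), (m + 1) = (∑ m ∈ range (j + 1), m) + (j + 1) := by
        rw [Finset.sum_add_distrib]; simp
      rw [h2]
      nlinarith [h3]
    calc ((j : ℝ≥0∞) + 1) ^ 2 = ((( j + 1) ^ 2 : ℕ) : ℝ≥0∞) := by push_cast; ring
      _ ≤ (((2 * ∑ m ∈ range (j + 1), (m + 1)) : ℕ) : ℝ≥0∞) := by exact_mod_cast Nat.cast_le.2 hnat
      _ = 2 * ∑ m ∈ range (j + 1), ((m : ℝ≥0∞) + 1) := by push_cast; ring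
  -- combine : ε' ^ 3 * B ≤ 2 * f k
  have combine : ε' ^ 3 * B ≤ 2 * f k := by
    calc ε' ^ 3 * B ≤ ε' ^ 3 * (2 * ∑' i, A (k + i)) := mul_le_mul_right step3 _
      _ = 2 * (ε' ^ 2 * (ε' * ∑' i, A (k + i))) := by ring
      _ ≤ 2 * (ε' ^ 2 * A k) := by
          refine mul_le_mul_right (mul_le_mul_right step2 _) _
      _ = 2 * (ε' * (ε' * A k)) := by ring
      _ ≤ 2 * (ε' * S k) := mul_le_mul_right (mul_le_mul_right (step1 k hk) _) _
      _ ≤ 2 * f k := mul_le_mul_right (hypE k hk) _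
  have hB : B ≤ 2 / ε' ^ 3 * f k := by
    have h1 : B ≤ 2 * f k / ε' ^ 3 := by
      rw [ENNReal.le_div_iff_mul_le (Or.inl (pow_ne_zero 3 hε'0))
        (Or.inl (ENNReal.pow_ne_top hε't))]
      calc B * ε' ^ 3 = ε' ^ 3 * B := mul_comm _ _
        _ ≤ 2 * f k := combine
    calc B ≤ 2 * f k / ε' ^ 3 := h1
      _ = 2 / ε' ^ 3 * f k := by
          rw [div_eq_mul_inv, div_eq_mul_inv]; ring
  -- convert back to ℝ
  have hterm : ∀ j : ℕ, ((j : ℝ) + 1) ^ 2 / (w (k + j)) ^ 2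
      = (((j : ℝ≥0∞) + 1) ^ 2 * f (k + j)).toReal := by
    intro j
    rw [ENNReal.toReal_mul, ENNReal.toReal_pow]
    have h1 : ((j : ℝ≥0∞) + 1).toReal = (j : ℝ) + 1 := by
      rw [ENNReal.toReal_add (by simp) (by simp)]; simp
    have h2 : (f (k + j)).toReal = 1 / (w (k + j)) ^ 2 := by
      rw [hfdef]; exact ENNReal.toReal_ofReal (by positivity)
    rw [h1, h2]
    ring
  have hLHS : ∑' j : ℕ, ((j : ℝ) + 1) ^ 2 / (w (k + j)) ^ 2 = B.toReal := by
    rw [hBdef, ENNReal.tsum_toReal_eq (fun j =>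
      ENNReal.mul_ne_top (ENNReal.pow_ne_top
        (ENNReal.add_ne_top.2 ⟨ENNReal.natCast_ne_top j, ENNReal.one_ne_top⟩)) (hfne _))]
    exact tsum_congr hterm
  have hRHS : (2 / ε' ^ 3 * f k).toReal = 2 / ε ^ 3 * (1 / (w k) ^ 2) := by
    rw [ENNReal.toReal_mul, ENNReal.toReal_div, ENNReal.toReal_pow]
    rw [hε'def, ENNReal.toReal_ofReal hε.le, hfdef]
    rw [ENNReal.toReal_ofReal (by positivity)]
    norm_num
  rw [hLHS, ← hRHS]
  exact ENNReal.toReal_mono (by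
    refine ENNReal.mul_ne_top ?_ (hfne k)
    exact (ENNReal.div_lt_top (by norm_num) (pow_ne_zero 3 hε'0)).ne) hB
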